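/- Let 𝒜 be an associative algebra (over any commutative ring) with generators D_1, …, D_n and defining relations ∑_{i=1}^r D_i D_{r+1−i} = 0 for r = 1, …, n. Set S = ∑_{i=2}^n D_i D_{n+2−i}. Then D_1 S − S D_1 = 0. -/
import Mathlib


/-- Let `𝒜` be an associative algebra (over any commutative ring) with
generators `D₁, …, Dₙ` and defining relations `∑_{i=1}^r Dᵢ D_{r+1−i} = 0` for `r = 1, …, n`.
Set `S = ∑_{i=2}^n Dᵢ D_{n+2−i}`.  Then `D₁ S − S D₁ = 0`.

(Equivalently, and as formalized here: in any associative algebra `A` over a commutative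
ring containing elements `D₁, …, Dₙ` satisfying the relations above, the identity
`D₁ S − S D₁ = 0` holds; applied to the universal example — the quotient of the free
algebra by the relations — this is exactly the statement above.) -/
theorem stmt2 {R A : Type*} [CommRing R] [Ring A] [Algebra R A] (n : ℕ) (D : ℕ → A)
    (hrel : ∀ r : ℕ, 1 ≤ r → r ≤ n →
      ∑ i ∈ Finset.Icc 1 r, D i * D (r + 1 - i) = 0) :
    D 1 * (∑ i ∈ Finset.Icc 2 n, D i * D (n + 2 - i)) -
      (∑ i ∈ Finset.Icc 2 n, D i * D (n + 2 - i)) * D 1 = 0 := by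
  -- Relation `r = i` rewritten: `D 1 * D i = -∑_{j=2}^i D j * D (i+1-j)`.
  have h1 : ∀ i ∈ Finset.Icc 2 n, D 1 * D i = -∑ j ∈ Finset.Icc 2 i, D j * D (i + 1 - j) := by
    intro i hi
    simp only [Finset.mem_Icc] at hi
    have h := hrel i (by omega) hi.2
    have hins : Finset.Icc 1 i = insert 1 (Finset.Icc 2 i) := by
      ext x; simp only [Finset.mem_Icc, Finset.mem_insert]; omega
    rw [hins, Finset.sum_insert (by simp)] at h
    have he : i + 1 - 1 = i := by omega
    rw [he] at h
    exact eq_neg_of_add_eq_zero_left h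
  -- Relation `r = n+2-i` rewritten: `D (n+2-i) * D 1 = -∑_{j=1}^{n+1-i} D j * D (n+2-i+1-j)`.
  have h2 : ∀ i ∈ Finset.Icc 2 n,
      D (n + 2 - i) * D 1 = -∑ j ∈ Finset.Icc 1 (n + 1 - i), D j * D (n + 2 - i + 1 - j) := by
    intro i hi
    simp only [Finset.mem_Icc] at hi
    have h := hrel (n + 2 - i) (by omega) (by omega)
    have hins : Finset.Icc 1 (n + 2 - i) = insert (n + 2 - i) (Finset.Icc 1 (n + 1 - i)) := by
      ext x; simp only [Finset.mem_Icc, Finset.mem_insert]; omega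
    rw [hins, Finset.sum_insert (by simp only [Finset.mem_Icc]; omega)] at h
    have he : n + 2 - i + 1 - (n + 2 - i) = 1 := by omega
    rw [he] at h
    exact eq_neg_of_add_eq_zero_left h
  -- `D 1 * S = -A`.
  have hA : D 1 * (∑ i ∈ Finset.Icc 2 n, D i * D (n + 2 - i)) =
      -∑ i ∈ Finset.Icc 2 n, ∑ j ∈ Finset.Icc 2 i, D j * D (i + 1 - j) * D (n + 2 - i) := by
    rw [Finset.mul_sum, ← Finset.sum_neg_distrib]
    refine Finset.sum_congr rfl fun i hi => ?_
    rw [← mul_assoc, h1 i hi, neg_mul, Finset.sum_mul]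
  -- `S * D 1 = -B`.
  have hB : (∑ i ∈ Finset.Icc 2 n, D i * D (n + 2 - i)) * D 1 =
      -∑ i ∈ Finset.Icc 2 n, ∑ j ∈ Finset.Icc 1 (n + 1 - i),
          D i * (D j * D (n + 2 - i + 1 - j)) := by
    rw [Finset.sum_mul, ← Finset.sum_neg_distrib]
    refine Finset.sum_congr rfl fun i hi => ?_
    rw [mul_assoc, h2 i hi, mul_neg, Finset.mul_sum]
  -- `A = B` by the reindexing `(i, j) ↦ (j, i + 1 - j)`.
  have hAB : ∑ i ∈ Finset.Icc 2 n, ∑ j ∈ Finset.Icc 2 i, D j * D (i + 1 - j) * D (n + 2 - i) =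
      ∑ i ∈ Finset.Icc 2 n, ∑ j ∈ Finset.Icc 1 (n + 1 - i),
          D i * (D j * D (n + 2 - i + 1 - j)) := by
    rw [Finset.sum_sigma', Finset.sum_sigma']
    refine Finset.sum_nbij' (fun p => ⟨p.2, p.1 + 1 - p.2⟩) (fun p => ⟨p.1 + p.2 - 1, p.1⟩)
      ?_ ?_ ?_ ?_ ?_
    · rintro ⟨i, j⟩ hp
      simp only [Finset.mem_sigma, Finset.mem_Icc] at hp ⊢
      omega
    · rintro ⟨i, j⟩ hp
      simp only [Finset.mem_sigma, Finset.mem_Icc] at hp ⊢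
      omega
    · rintro ⟨i, j⟩ hp
      simp only [Finset.mem_sigma, Finset.mem_Icc] at hp
      simp only [Sigma.mk.inj_iff]
      exact ⟨by omega, HEq.rfl⟩
    · rintro ⟨i, j⟩ hp
      simp only [Finset.mem_sigma, Finset.mem_Icc] at hp
      simp only [Sigma.mk.inj_iff]
      exact ⟨trivial, heq_of_eq (by omega)⟩
    · rintro ⟨i, j⟩ hp
      simp only [Finset.mem_sigma, Finset.mem_Icc] at hp
      have e1 : n + 2 - j + 1 - (i + 1 - j) = n + 2 - i := by omega
      dsimp only
      rw [e1, mul_assoc]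
  rw [hA, hB, hAB, sub_self]
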